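/- Mirsky's theorem (sufficiency direction): if real numbers a₁,…,a_n and ω₁,…,ω_n satisfy the majorization (a₁,…,a_n) ≺ (ω₁,…,ω_n), then there exists a real symmetric n×n matrix with eigenvalues ω₁,…,ω_n and diagonal entries a₁,…,a_n in that order. -/

import Mathlib

open Matrix Finset

section MirskyAux
open Polynomial


lemma my_charmatrix_eq {m : Type*} [Fintype m] [DecidableEq m] (M : Matrix m m ℝ) :
    charmatrix M = Matrix.diagonal (fun _ => (X : ℝ[X])) - M.map C := by
  ext i j
  simp [charmatrix_apply, Matrix.sub_apply, Matrix.map_apply]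

lemma my_charpoly_conj {m : Type*} [Fintype m] [DecidableEq m]
    (U V M : Matrix m m ℝ) (h1 : U * V = 1) (h2 : V * U = 1) :
    (U * M * V).charpoly = M.charpoly := by
  have hUV : (U.map C) * (V.map C) = (1 : Matrix m m ℝ[X]) := by
    rw [← Matrix.map_mul (f := (C : ℝ →+* ℝ[X])), h1]
    simp [Matrix.map_one]
  have hVU : (V.map C) * (U.map C) = (1 : Matrix m m ℝ[X]) := by
    rw [← Matrix.map_mul (f := (C : ℝ →+* ℝ[X])), h2]
    simp [Matrix.map_one]
  have hD : Matrix.diagonal (fun _ => (X : ℝ[X])) = (X : ℝ[X]) • (1 : Matrix m m ℝ[X]) := by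
    ext i j; by_cases h : i = j <;> simp [Matrix.diagonal, h]
  have key : charmatrix (U * M * V) = (U.map C) * charmatrix M * (V.map C) := by
    rw [my_charmatrix_eq, my_charmatrix_eq]
    rw [Matrix.map_mul (f := (C : ℝ →+* ℝ[X])), Matrix.map_mul (f := (C : ℝ →+* ℝ[X]))]
    rw [Matrix.mul_sub, Matrix.sub_mul]
    congr 1
    rw [hD]
    rw [Matrix.mul_smul, mul_one, Matrix.smul_mul, hUV]
  unfold Matrix.charpoly
  rw [key, Matrix.det_mul, Matrix.det_mul]
  have : (U.map C).det * (V.map C).det = 1 := by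
    rw [← Matrix.det_mul, hUV, Matrix.det_one]
  calc (U.map C).det * (charmatrix M).det * (V.map C).det
      = (U.map C).det * (V.map C).det * (charmatrix M).det := by ring
    _ = (charmatrix M).det := by rw [this, one_mul]

lemma my_charpoly_diagonal {m : Type*} [Fintype m] [DecidableEq m] (d : m → ℝ) :
    (Matrix.diagonal d).charpoly = ∏ i, (X - C (d i)) := by
  unfold Matrix.charpoly
  rw [my_charmatrix_eq]
  have : Matrix.diagonal (fun _ => (X : ℝ[X])) - (Matrix.diagonal d).map C
      = Matrix.diagonal (fun i => X - C (d i)) := by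
    ext i j
    by_cases h : i = j <;> simp [Matrix.diagonal, h, Matrix.map_apply]
  rw [this, Matrix.det_diagonal]


lemma my_charpoly_roots {m : Type*} [Fintype m] [DecidableEq m] (μ : m → ℝ) :
    (∏ i, (X - C (μ i))).roots = Multiset.map μ Finset.univ.val := by
  rw [Finset.prod_eq_multiset_prod]
  rw [show Multiset.map (fun i => X - C (μ i)) Finset.univ.val
      = Multiset.map (fun a => X - C a) (Multiset.map μ Finset.univ.val) by
    rw [Multiset.map_map]; rfl]
  exact Polynomial.roots_multiset_prod_X_sub_C _

lemma my_eig_multiset {m : Type*} [Fintype m] [DecidableEq m]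
    (M : Matrix m m ℝ) (hM : M.IsHermitian) (U : Matrix m m ℝ) (μ : m → ℝ)
    (hU : U ∈ Matrix.unitaryGroup m ℝ)
    (hdec : M = U * Matrix.diagonal μ * star U) :
    Multiset.map hM.eigenvalues Finset.univ.val = Multiset.map μ Finset.univ.val := by
  have h1 : U * star U = 1 := Matrix.mem_unitaryGroup_iff.mp hU
  have h2 : star U * U = 1 := Matrix.mem_unitaryGroup_iff'.mp hU
  have hc1 : M.charpoly = ∏ i, (X - C (μ i)) := by
    rw [hdec, my_charpoly_conj _ _ _ h1 h2, my_charpoly_diagonal]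
  have hst := hM.spectral_theorem
  have hofr : (RCLike.ofReal ∘ hM.eigenvalues : m → ℝ) = hM.eigenvalues := by
    funext i; simp
  rw [hofr] at hst
  have hU0 : (hM.eigenvectorUnitary : Matrix m m ℝ) ∈ Matrix.unitaryGroup m ℝ :=
    hM.eigenvectorUnitary.2
  have hc2 : M.charpoly = ∏ i, (X - C (hM.eigenvalues i)) := by
    calc M.charpoly
        = ((hM.eigenvectorUnitary : Matrix m m ℝ) * Matrix.diagonal hM.eigenvalues
            * star (hM.eigenvectorUnitary : Matrix m m ℝ)).charpoly := congrArg _ hst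
      _ = ∏ i, (X - C (hM.eigenvalues i)) := by
          rw [my_charpoly_conj _ _ _ (Matrix.mem_unitaryGroup_iff.mp hU0)
            (Matrix.mem_unitaryGroup_iff'.mp hU0), my_charpoly_diagonal]
  have := congrArg Polynomial.roots (hc2.symm.trans hc1)
  rwa [my_charpoly_roots, my_charpoly_roots] at this

lemma my_exists_perm {n : ℕ} (f g : Fin n → ℝ)
    (h : Multiset.map f Finset.univ.val = Multiset.map g Finset.univ.val) :
    ∃ π : Equiv.Perm (Fin n), ∀ i, f i = g (π i) := by
  have huv : (Finset.univ.val : Multiset (Fin n)) = ↑(List.finRange n) := rfl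
  have hperm : (List.ofFn f).Perm (List.ofFn g) := by
    rw [List.ofFn_eq_map, List.ofFn_eq_map, ← Multiset.coe_eq_coe]
    rw [huv] at h
    simpa [Multiset.map_coe] using h
  have h1 : List.ofFn (f ∘ (Tuple.sort f)) = List.ofFn (g ∘ (Tuple.sort g)) :=
    List.Perm.eq_of_sortedLE
      (Tuple.monotone_sort f).sortedLE_ofFn (Tuple.monotone_sort g).sortedLE_ofFn
      (((Tuple.sort f).ofFn_comp_perm f).trans
        (hperm.trans ((Tuple.sort g).ofFn_comp_perm g).symm))
  have h2 : f ∘ (Tuple.sort f) = g ∘ (Tuple.sort g) := List.ofFn_injective h1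
  refine ⟨(Tuple.sort f).symm.trans (Tuple.sort g), fun i => ?_⟩
  have := congrFun h2 ((Tuple.sort f).symm i)
  simpa using this


/-- rotation by (c,s) acting on coordinates `inl 0` and `inr p`. -/
def rotW {n : ℕ} (p : Fin n) (c s : ℝ) : Matrix (Fin 1 ⊕ Fin n) (Fin 1 ⊕ Fin n) ℝ :=
  Matrix.of fun x y =>
    match x, y with
    | Sum.inl _, Sum.inl _ => c
    | Sum.inl _, Sum.inr j => if j = p then -s else 0
    | Sum.inr i, Sum.inl _ => if i = p then s else 0
    | Sum.inr i, Sum.inr j => if i = j then (if i = p then c else 1) else 0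

@[simp] lemma rotW_11 {n : ℕ} (p : Fin n) (c s : ℝ) (u v : Fin 1) :
    rotW p c s (Sum.inl u) (Sum.inl v) = c := rfl
@[simp] lemma rotW_12 {n : ℕ} (p : Fin n) (c s : ℝ) (u : Fin 1) (j : Fin n) :
    rotW p c s (Sum.inl u) (Sum.inr j) = if j = p then -s else 0 := rfl
@[simp] lemma rotW_21 {n : ℕ} (p : Fin n) (c s : ℝ) (i : Fin n) (u : Fin 1) :
    rotW p c s (Sum.inr i) (Sum.inl u) = if i = p then s else 0 := rfl
@[simp] lemma rotW_22 {n : ℕ} (p : Fin n) (c s : ℝ) (i j : Fin n) :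
    rotW p c s (Sum.inr i) (Sum.inr j) = if i = j then (if i = p then c else 1) else 0 := rfl

lemma rotW_mul_transpose {n : ℕ} (p : Fin n) (c s : ℝ) (h : c^2 + s^2 = 1) :
    rotW p c s * (rotW p c s)ᵀ = 1 := by
  ext x y
  rw [Matrix.mul_apply]
  simp only [Matrix.transpose_apply]
  rw [Fintype.sum_sum_type, Fin.sum_univ_one]
  rcases x with x | x <;> rcases y with y | y
  · have hxy : x = y := Subsingleton.elim x y
    subst hxy
    rw [Finset.sum_eq_single_of_mem p (Finset.mem_univ p)
      (fun z _ hz => by simp only [rotW_12, if_neg hz, zero_mul])]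
    simp only [rotW_11, rotW_12, Matrix.one_apply_eq, if_true]
    linear_combination h
  · rw [Finset.sum_eq_single_of_mem p (Finset.mem_univ p)
      (fun z _ hz => by simp only [rotW_12, if_neg hz, zero_mul])]
    rw [Matrix.one_apply_ne Sum.inl_ne_inr]
    simp only [rotW_11, rotW_12, rotW_22]
    by_cases hy : y = p
    · subst hy; simp; ring
    · simp [hy]
  · rw [Finset.sum_eq_single_of_mem x (Finset.mem_univ x)
      (fun z _ hz => by simp only [rotW_22, if_neg (Ne.symm hz), zero_mul])]
    rw [Matrix.one_apply_ne Sum.inr_ne_inl]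
    simp only [rotW_11, rotW_21, rotW_12, rotW_22]
    by_cases hx : x = p
    · subst hx; simp; ring
    · simp [hx]
  · rw [Finset.sum_eq_single_of_mem x (Finset.mem_univ x)
      (fun z _ hz => by simp only [rotW_22, if_neg (Ne.symm hz), zero_mul])]
    simp only [rotW_21, rotW_22, Matrix.one_apply, Sum.inr.injEq]
    by_cases hxy : x = y
    · subst hxy
      by_cases hx : x = p
      · subst hx; simp; linear_combination h
      · simp [hx]
    · rw [if_neg hxy]
      have hyx : y ≠ x := fun h' => hxy h'.symm
      by_cases hx : x = p <;> by_cases hy : y = p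
      · exact absurd (hx.trans hy.symm) hxy
      · simp [hx, hy, hyx, Ne.symm hy]
      · simp [hx, hy, hyx, Ne.symm hx]
      · simp [hx, hy, hyx]

lemma rotW_conj {n : ℕ} (p : Fin n) (c s l1 l2 : ℝ) (μ' : Fin n → ℝ) :
    rotW p c s * Matrix.diagonal (Sum.elim (fun _ => l1) (Function.update μ' p l2))
        * (rotW p c s)ᵀ
      = Matrix.fromBlocks (Matrix.of fun _ _ => c^2*l1 + s^2*l2)
          (Matrix.of fun _ j => if j = p then c*s*(l1-l2) else 0)
          (Matrix.of fun i _ => if i = p then c*s*(l1-l2) else 0)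
          (Matrix.diagonal (Function.update μ' p (s^2*l1 + c^2*l2))) := by
  ext x y
  rw [Matrix.mul_apply]
  rw [Fintype.sum_sum_type, Fin.sum_univ_one]
  simp only [Matrix.mul_diagonal, Matrix.transpose_apply, Sum.elim_inl, Sum.elim_inr]
  rcases x with x | x <;> rcases y with y | y
  · rw [Finset.sum_eq_single_of_mem p (Finset.mem_univ p)
      (fun z _ hz => by
        simp only [rotW_12, Function.update_apply]
        rw [if_neg hz, zero_mul, zero_mul])]
    simp only [rotW_11, rotW_12, Matrix.fromBlocks_apply₁₁, Matrix.of_apply,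
      Function.update_self, if_true]
    ring
  · rw [Finset.sum_eq_single_of_mem p (Finset.mem_univ p)
      (fun z _ hz => by
        simp only [rotW_12]
        rw [if_neg hz, zero_mul, zero_mul])]
    simp only [rotW_11, rotW_12, rotW_22, Matrix.fromBlocks_apply₁₂, Matrix.of_apply,
      Function.update_self, if_true]
    by_cases hy : y = p
    · subst hy; simp; ring
    · simp [hy]
  · rw [Finset.sum_eq_single_of_mem x (Finset.mem_univ x)
      (fun z _ hz => by
        simp only [rotW_22]
        rw [if_neg (Ne.symm hz), zero_mul, zero_mul])]
    simp only [rotW_11, rotW_21, rotW_12, rotW_22, Matrix.fromBlocks_apply₂₁, Matrix.of_apply,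
      Function.update_self, if_true]
    by_cases hx : x = p
    · subst hx; simp; ring
    · simp [hx]
  · rw [Finset.sum_eq_single_of_mem x (Finset.mem_univ x)
      (fun z _ hz => by
        simp only [rotW_22]
        rw [if_neg (Ne.symm hz), zero_mul, zero_mul])]
    simp only [rotW_21, rotW_22, Matrix.fromBlocks_apply₂₂, Matrix.of_apply, if_true]
    by_cases hxy : x = y
    · subst hxy
      rw [Matrix.diagonal_apply_eq]
      by_cases hx : x = p
      · subst hx
        simp only [Function.update_self, if_true]
        ring
      · rw [Function.update_of_ne hx, Function.update_of_ne hx]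
        simp [hx]
    · rw [Matrix.diagonal_apply_ne _ hxy]
      have hyx : y ≠ x := fun h' => hxy h'.symm
      by_cases hx : x = p <;> by_cases hy : y = p
      · exact absurd (hx.trans hy.symm) hxy
      · simp [hx, hy, hyx, Ne.symm hy]
      · simp [hx, hy, hyx, Ne.symm hx]
      · simp [hx, hy, hyx]

lemma my_hins (ω ω' : ℕ → ℝ) (k : ℕ) (b : ℝ)
    (h1 : ∀ j, j < k → ω' j = ω j) (h2 : ω' k = b) (h3 : ∀ j, k < j → ω' j = ω (j+1)) :
    ∀ m, k + 1 ≤ m →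
      Multiset.map ω' (Multiset.range m) + {ω k, ω (k+1)}
        = Multiset.map ω (Multiset.range (m+1)) + {b} := by
  intro m hm
  induction m, hm using Nat.le_induction with
  | base =>
    rw [Multiset.range_succ, Multiset.map_cons, h2]
    rw [show k + 1 + 1 = (k+1)+1 from rfl, Multiset.range_succ, Multiset.map_cons,
      Multiset.range_succ, Multiset.map_cons]
    rw [Multiset.map_congr rfl (fun x hx => h1 x (Multiset.mem_range.mp hx))]
    simp only [Multiset.insert_eq_cons, ← Multiset.singleton_add]
    abel
  | succ m hm ih =>
    rw [Multiset.range_succ, Multiset.map_cons, h3 m (by omega)]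
    rw [show m + 1 + 1 = (m+1)+1 from rfl, Multiset.range_succ (m+1), Multiset.map_cons]
    rw [Multiset.cons_add, Multiset.cons_add, ih]


-- Fin-multiset to range-multiset
lemma my_fin_multiset (m : ℕ) (f : ℕ → ℝ) :
    Multiset.map (fun i : Fin m => f ↑i) Finset.univ.val = Multiset.map f (Multiset.range m) := by
  have h1 : Multiset.map Fin.val (Finset.univ.val : Multiset (Fin m)) = Multiset.range m := by
    have := congrArg Finset.val (Fin.map_valEmbedding_univ (n := m))
    rw [Finset.map_val] at this
    rw [Nat.Iio_eq_range, Finset.range_val] at this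
    exact this
  rw [← h1, Multiset.map_map]
  rfl

lemma mirsky_core : ∀ (n : ℕ) (a ω : ℕ → ℝ),
    (∀ i j, i ≤ j → j < n → a j ≤ a i) →
    (∀ i j, i ≤ j → j < n → ω j ≤ ω i) →
    (∀ k, k ≤ n → ∑ j ∈ Finset.range k, a j ≤ ∑ j ∈ Finset.range k, ω j) →
    (∑ j ∈ Finset.range n, a j = ∑ j ∈ Finset.range n, ω j) →
    ∃ (U : Matrix (Fin n) (Fin n) ℝ) (μ : Fin n → ℝ),
      U ∈ Matrix.unitaryGroup (Fin n) ℝ ∧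
      Multiset.map μ Finset.univ.val = Multiset.map (fun i : Fin n => ω ↑i) Finset.univ.val ∧
      (∀ i : Fin n, (U * Matrix.diagonal μ * star U) i i = a ↑i) := by
  intro n
  induction n with
  | zero =>
    intro a ω _ _ _ _
    exact ⟨1, fun i => ω ↑i, by simp [Matrix.mem_unitaryGroup_iff], rfl, fun i => i.elim0⟩
  | succ n IH =>
    intro a ω ha hω hmaj hsum
    by_cases hA : ∀ j, j < n + 1 → a 0 ≤ ω j
    · -- all ω's at least a 0 : forces a = ω on range (n+1)
      have hle : ∀ j ∈ Finset.range (n+1), a j ≤ ω j := fun j hj =>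
        (ha 0 j (Nat.zero_le _) (Finset.mem_range.mp hj)).trans (hA j (Finset.mem_range.mp hj))
      have heq : ∀ j ∈ Finset.range (n+1), a j = ω j :=
        (Finset.sum_eq_sum_iff_of_le hle).mp hsum
      refine ⟨1, fun i => ω ↑i, by simp [Matrix.mem_unitaryGroup_iff], rfl, fun i => ?_⟩
      have := heq ↑i (Finset.mem_range.mpr i.isLt)
      simp [this]
    · push_neg at hA
      obtain ⟨j0, hj0n, hj0⟩ := hA
      -- the pivot k
      have ha0 : a 0 ≤ ω 0 := by
        have := hmaj 1 (by omega)
        simpa [Finset.sum_range_one] using this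
      set S : Finset ℕ := (Finset.range (n+1)).filter (fun j => a 0 ≤ ω j) with hS
      have hSne : S.Nonempty :=
        ⟨0, by simp only [hS, Finset.mem_filter, Finset.mem_range]; exact ⟨by omega, ha0⟩⟩
      set k := S.max' hSne with hkdef
      have hkS : k ∈ S := S.max'_mem hSne
      have hkn1 : k < n + 1 := Finset.mem_range.mp (Finset.mem_filter.mp hkS).1
      have hωk : a 0 ≤ ω k := (Finset.mem_filter.mp hkS).2
      have hkmax : ∀ j ∈ S, j ≤ k := fun j hj => S.le_max' j hj
      have hkj0 : k < j0 := by
        by_contra h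
        push_neg at h
        exact absurd (le_trans hωk (hω j0 k h hkn1)) (not_le.mpr hj0)
      have hkn : k + 1 ≤ n := by omega
      have hωk1 : ω (k+1) < a 0 := by
        by_contra h
        push_neg at h
        have : k + 1 ∈ S := Finset.mem_filter.mpr ⟨Finset.mem_range.mpr (by omega), h⟩
        have := hkmax _ this
        omega
      set lam1 := ω k with hlam1
      set lam2 := ω (k+1) with hlam2
      set b := lam1 + lam2 - a 0 with hbdef
      set dd := lam1 - lam2 with hdd
      have hddpos : 0 < dd := by simp only [hdd]; linarith
      have hblam2 : lam2 ≤ b := by simp only [hbdef]; linarith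
      have hblam1 : b ≤ lam1 := by simp only [hbdef]; linarith
      -- new sequences
      set a' : ℕ → ℝ := fun j => a (j+1) with ha'def
      set ω' : ℕ → ℝ := fun j => if j < k then ω j else if j = k then b else ω (j+1) with hω'def
      have hω'k : ω' k = b := by simp [hω'def]
      have hω'lt : ∀ j, j < k → ω' j = ω j := fun j hj => by simp [hω'def, hj]
      have hω'gt : ∀ j, k < j → ω' j = ω (j+1) := fun j hj => by
        simp only [hω'def]
        rw [if_neg (by omega), if_neg (by omega)]
      have ha' : ∀ i j, i ≤ j → j < n → a' j ≤ a' i := fun i j hij hj =>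
        ha (i+1) (j+1) (by omega) (by omega)
      have hω'anti : ∀ i j, i ≤ j → j < n → ω' j ≤ ω' i := by
        intro i j hij hj
        rcases lt_trichotomy j k with hjk | hjk | hjk
        · rw [hω'lt j hjk, hω'lt i (by omega)]
          exact hω i j hij (by omega)
        · subst hjk
          rw [hω'k]
          rcases eq_or_lt_of_le hij with rfl | hik
          · rw [hω'k]
          · rw [hω'lt i hik]
            exact le_trans hblam1 (hω i k (by omega) (by omega))
        · rw [hω'gt j hjk]
          rcases lt_trichotomy i k with hik | hik | hik
          · rw [hω'lt i hik]
            exact hω i (j+1) (by omega) (by omega)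
          · subst hik
            rw [hω'k]
            exact le_trans (hω (k+1) (j+1) (by omega) (by omega)) hblam2
          · rw [hω'gt i hik]
            exact hω (i+1) (j+1) (by omega) (by omega)
      -- partial sums of ω'
      have hsumω' : ∀ m, k + 1 ≤ m →
          ∑ j ∈ Finset.range m, ω' j = ∑ j ∈ Finset.range (m+1), ω j - a 0 := by
        intro m hm
        induction m, hm using Nat.le_induction with
        | base =>
          rw [Finset.sum_range_succ, hω'k]
          have : ∑ j ∈ Finset.range k, ω' j = ∑ j ∈ Finset.range k, ω j :=
            Finset.sum_congr rfl fun j hj => hω'lt j (Finset.mem_range.mp hj)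
          rw [this, Finset.sum_range_succ, Finset.sum_range_succ]
          simp only [hbdef, hlam1, hlam2]
          ring
        | succ m hm ih =>
          rw [Finset.sum_range_succ, ih, hω'gt m (by omega),
            Finset.sum_range_succ (n := m + 1)]
          ring
      have hsuma' : ∀ m, ∑ j ∈ Finset.range m, a' j = ∑ j ∈ Finset.range (m+1), a j - a 0 := by
        intro m
        rw [Finset.sum_range_succ']
        simp only [ha'def]
        ring
      have hmaj' : ∀ m, m ≤ n → ∑ j ∈ Finset.range m, a' j ≤ ∑ j ∈ Finset.range m, ω' j := by
        intro m hm
        rcases le_or_gt m k with hmk | hmk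
        · have h1 : ∑ j ∈ Finset.range m, ω' j = ∑ j ∈ Finset.range m, ω j :=
            Finset.sum_congr rfl fun j hj => hω'lt j (by
              have := Finset.mem_range.mp hj; omega)
          rw [h1]
          have h2 : ∑ j ∈ Finset.range m, a' j ≤ ∑ j ∈ Finset.range m, a j := by
            apply Finset.sum_le_sum
            intro j hj
            exact ha j (j+1) (by omega) (by have := Finset.mem_range.mp hj; omega)
          exact le_trans h2 (hmaj m (by omega))
        · rw [hsumω' m (by omega), hsuma' m]
          have := hmaj (m+1) (by omega)
          linarith
      have htot' : ∑ j ∈ Finset.range n, a' j = ∑ j ∈ Finset.range n, ω' j := by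
        rw [hsumω' n (by omega), hsuma' n, hsum]
      obtain ⟨U', μ', hU', hμ', hdiag'⟩ := IH a' ω' ha' hω'anti hmaj' htot'
      -- locate b inside μ'
      have hkltn : k < n := by omega
      have hbmem : b ∈ Multiset.map μ' Finset.univ.val := by
        rw [hμ']
        exact Multiset.mem_map.mpr ⟨⟨k, hkltn⟩, Finset.mem_val.mpr (Finset.mem_univ _), hω'k⟩
      obtain ⟨p, hpmem, hp⟩ := Multiset.mem_map.mp hbmem
      have hstarU' : star U' = U'ᵀ := by simp [Matrix.star_eq_conjTranspose]
      have hU'1 : U' * U'ᵀ = 1 := by rw [← hstarU']; exact Matrix.mem_unitaryGroup_iff.mp hU'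
      have hU'2 : U'ᵀ * U' = 1 := by rw [← hstarU']; exact Matrix.mem_unitaryGroup_iff'.mp hU'
      have hdd0 : dd ≠ 0 := ne_of_gt hddpos
      have hdd0' : lam1 - lam2 ≠ 0 := by rw [← hdd]; exact hdd0
      set c : ℝ := Real.sqrt ((a 0 - lam2)/dd) with hcdef
      set s : ℝ := Real.sqrt ((lam1 - a 0)/dd) with hsdef
      have hc2 : c^2 = (a 0 - lam2)/dd := Real.sq_sqrt (div_nonneg (by linarith) hddpos.le)
      have hs2 : s^2 = (lam1 - a 0)/dd := Real.sq_sqrt (div_nonneg (by linarith) hddpos.le)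
      have hcs : c^2 + s^2 = 1 := by
        rw [hc2, hs2, hdd, ← add_div, div_eq_one_iff_eq hdd0']
        ring
      have key1 : c^2*lam1 + s^2*lam2 = a 0 := by
        rw [hc2, hs2, hdd]
        field_simp
        ring
      have key2 : s^2*lam1 + c^2*lam2 = b := by
        rw [hc2, hs2, hdd, hbdef]
        field_simp
        ring
      set μbig : Fin 1 ⊕ Fin n → ℝ := Sum.elim (fun _ => lam1) (Function.update μ' p lam2)
        with hμbig
      set W := rotW p c s with hWdef
      set V : Matrix (Fin 1 ⊕ Fin n) (Fin 1 ⊕ Fin n) ℝ := Matrix.fromBlocks 1 0 0 U' with hV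
      have hWWt : W * Wᵀ = 1 := rotW_mul_transpose p c s hcs
      have hVVt : V * Vᵀ = 1 := by
        rw [hV, Matrix.fromBlocks_transpose, Matrix.fromBlocks_multiply]
        simp only [Matrix.transpose_one, Matrix.transpose_zero, Matrix.mul_one, Matrix.mul_zero,
          Matrix.zero_mul, Matrix.one_mul, add_zero, zero_add]
        rw [hU'1, Matrix.fromBlocks_one]
      set Ubig := V * W with hUbig
      have hUbigT : Ubig * Ubigᵀ = 1 := by
        rw [hUbig, Matrix.transpose_mul]
        have hassoc : V * W * (Wᵀ * Vᵀ) = V * (W * Wᵀ) * Vᵀ := by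
          simp only [Matrix.mul_assoc]
        rw [hassoc, hWWt, Matrix.mul_one, hVVt]
      have hμ'p_update : Function.update μ' p (s^2*lam1 + c^2*lam2) = μ' := by
        rw [key2, ← hp]
        exact Function.update_eq_self p μ'
      have hconj : W * Matrix.diagonal μbig * Wᵀ
          = Matrix.fromBlocks (Matrix.of fun _ _ => a 0)
              (Matrix.of fun _ j => if j = p then c*s*dd else 0)
              (Matrix.of fun i _ => if i = p then c*s*dd else 0)
              (Matrix.diagonal μ') := by
        rw [hWdef, hμbig, rotW_conj, key1, hμ'p_update, ← hdd]
      have hMdec : Ubig * Matrix.diagonal μbig * Ubigᵀ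
          = Matrix.fromBlocks (Matrix.of fun _ _ => a 0)
              ((Matrix.of fun (_ : Fin 1) (j : Fin n) => if j = p then c*s*dd else 0) * U'ᵀ)
              (U' * (Matrix.of fun (i : Fin n) (_ : Fin 1) => if i = p then c*s*dd else 0))
              (U' * Matrix.diagonal μ' * U'ᵀ) := by
        rw [hUbig, Matrix.transpose_mul]
        have hassoc : V * W * Matrix.diagonal μbig * (Wᵀ * Vᵀ)
            = V * (W * Matrix.diagonal μbig * Wᵀ) * Vᵀ := by
          simp only [Matrix.mul_assoc]
        rw [hassoc, hconj, hV, Matrix.fromBlocks_transpose, Matrix.fromBlocks_multiply,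
          Matrix.fromBlocks_multiply]
        simp only [Matrix.transpose_one, Matrix.transpose_zero, Matrix.one_mul, Matrix.mul_one,
          Matrix.zero_mul, Matrix.mul_zero, add_zero, zero_add, Matrix.mul_assoc]
      set e : (Fin 1 ⊕ Fin n) ≃ Fin (n+1) := finSumFinEquiv.trans (finCongr (by omega)) with he
      have he1 : ∀ (u : Fin 1), ((e (Sum.inl u) : Fin (n+1)) : ℕ) = 0 := by
        intro u
        simp [he, finSumFinEquiv_apply_left]
      have he2 : ∀ (i : Fin n), ((e (Sum.inr i) : Fin (n+1)) : ℕ) = (i : ℕ) + 1 := by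
        intro i
        simp [he, finSumFinEquiv_apply_right]
      have hstarsub : star (Ubig.submatrix ⇑e.symm ⇑e.symm) = Ubigᵀ.submatrix ⇑e.symm ⇑e.symm := by
        rw [show star (Ubig.submatrix ⇑e.symm ⇑e.symm) = (Ubig.submatrix ⇑e.symm ⇑e.symm)ᵀ from by
          simp [Matrix.star_eq_conjTranspose], Matrix.transpose_submatrix]
      have hdiagsub : Matrix.diagonal (μbig ∘ ⇑e.symm)
          = (Matrix.diagonal μbig).submatrix ⇑e.symm ⇑e.symm := by
        ext x y
        by_cases hxy : x = y
        · subst hxy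
          rw [Matrix.diagonal_apply_eq, Matrix.submatrix_apply, Matrix.diagonal_apply_eq]
          rfl
        · rw [Matrix.diagonal_apply_ne _ hxy, Matrix.submatrix_apply,
            Matrix.diagonal_apply_ne _ (fun h' => hxy (e.symm.injective h'))]
      have hprod : Ubig.submatrix ⇑e.symm ⇑e.symm * Matrix.diagonal (μbig ∘ ⇑e.symm)
            * star (Ubig.submatrix ⇑e.symm ⇑e.symm)
          = (Ubig * Matrix.diagonal μbig * Ubigᵀ).submatrix ⇑e.symm ⇑e.symm := by
        rw [hstarsub, hdiagsub, Matrix.submatrix_mul_equiv, Matrix.submatrix_mul_equiv]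
      refine ⟨Ubig.submatrix ⇑e.symm ⇑e.symm, μbig ∘ ⇑e.symm, ?_, ?_, ?_⟩
      · rw [Matrix.mem_unitaryGroup_iff, hstarsub, Matrix.submatrix_mul_equiv, hUbigT,
          Matrix.submatrix_one_equiv]
      · -- multiset bookkeeping
        have hms1 : Multiset.map (μbig ∘ ⇑e.symm) Finset.univ.val
            = Multiset.map μbig Finset.univ.val := by
          conv_rhs => rw [← Finset.map_univ_equiv e.symm]
          rw [Finset.map_val, Multiset.map_map]
          rfl
        have huniv : (Finset.univ.val : Multiset (Fin 1 ⊕ Fin n))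
            = Multiset.map Sum.inl Finset.univ.val + Multiset.map Sum.inr Finset.univ.val := by
          rw [← Finset.univ_disjSum_univ, Finset.val_disjSum]
          rfl
        have hms2 : Multiset.map μbig (Finset.univ.val : Multiset (Fin 1 ⊕ Fin n))
            = lam1 ::ₘ Multiset.map (Function.update μ' p lam2) Finset.univ.val := by
          rw [huniv, Multiset.map_add, Multiset.map_map, Multiset.map_map]
          rw [show μbig ∘ Sum.inl = fun _ => lam1 from rfl,
            show μbig ∘ Sum.inr = Function.update μ' p lam2 from rfl]
          rw [show (Finset.univ.val : Multiset (Fin 1)) = {0} from rfl, Multiset.map_singleton,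
            Multiset.singleton_add]
        set E := Multiset.map μ' (Finset.univ.val.erase p) with hE
        have hpun : p ∈ (Finset.univ.val : Multiset (Fin n)) := Finset.mem_val.mpr (Finset.mem_univ p)
        have hd1 : Multiset.map μ' Finset.univ.val = b ::ₘ E := by
          conv_lhs => rw [← Multiset.cons_erase hpun]
          rw [Multiset.map_cons, hp]
        have hupdate_erase : Multiset.map (Function.update μ' p lam2)
            ((Finset.univ.val : Multiset (Fin n)).erase p) = E := by
          rw [hE]
          apply Multiset.map_congr rfl
          intro x hx
          have hxp : x ≠ p := ((Finset.univ.nodup).mem_erase_iff.mp hx).1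
          exact Function.update_of_ne hxp _ _
        have hd2 : Multiset.map (Function.update μ' p lam2) Finset.univ.val = lam2 ::ₘ E := by
          conv_lhs => rw [← Multiset.cons_erase hpun]
          rw [Multiset.map_cons, Function.update_self, hupdate_erase]
        have hμ'r : Multiset.map μ' Finset.univ.val = Multiset.map ω' (Multiset.range n) := by
          rw [hμ', my_fin_multiset]
        have hbE : b ::ₘ E = Multiset.map ω' (Multiset.range n) := by rw [← hd1, hμ'r]
        have hins := my_hins ω ω' k b hω'lt hω'k hω'gt n (by omega)
        have hEfin : E + {ω k, ω (k+1)} = Multiset.map ω (Multiset.range (n+1)) := by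
          have h' : b ::ₘ (E + {ω k, ω (k+1)}) = b ::ₘ Multiset.map ω (Multiset.range (n+1)) := by
            rw [← Multiset.cons_add, hbE, hins, ← Multiset.singleton_add, add_comm]
          exact (Multiset.cons_inj_right b).mp h'
        rw [hms1, hms2, hd2, my_fin_multiset (n+1) ω, ← hEfin, hlam1, hlam2]
        simp only [Multiset.insert_eq_cons, ← Multiset.singleton_add]
        abel
      · intro i
        rw [hprod, Matrix.submatrix_apply, hMdec]
        rcases hei : e.symm i with u | j
        · have hiv : (i : ℕ) = 0 := by
            have : i = e (Sum.inl u) := by rw [← hei, Equiv.apply_symm_apply]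
            rw [this, he1]
          rw [Matrix.fromBlocks_apply₁₁, Matrix.of_apply, hiv]
        · have hiv : (i : ℕ) = (j : ℕ) + 1 := by
            have : i = e (Sum.inr j) := by rw [← hei, Equiv.apply_symm_apply]
            rw [this, he2]
          rw [Matrix.fromBlocks_apply₂₂, hiv]
          have := hdiag' j
          rw [hstarU'] at this
          exact this



lemma my_filter_eq_range (n k : ℕ) (hk : k ≤ n) (f : Fin n → ℝ) (F : ℕ → ℝ)
    (hF : ∀ i : Fin n, F ↑i = f i) :
    ∑ i ∈ Finset.univ.filter (fun i : Fin n => (i:ℕ) < k), f i = ∑ j ∈ Finset.range k, F j := by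
  have h1 : ∑ i ∈ Finset.univ.filter (fun i : Fin n => (i:ℕ) < k), f i
      = ∑ i : Fin n, if (i:ℕ) < k then F ↑i else 0 := by
    rw [Finset.sum_filter]
    exact Finset.sum_congr rfl fun i _ => by rw [hF]
  rw [h1, Fin.sum_univ_eq_sum_range (fun j => if j < k then F j else 0) n, ← Finset.sum_filter]
  have h2 : (Finset.range n).filter (fun j => j < k) = Finset.range k := by
    ext x
    simp only [Finset.mem_filter, Finset.mem_range]
    omega
  rw [h2]


end MirskyAux

/-- Mirsky, sufficiency: if `(a₁,…,a_n) ≺ (ω₁,…,ω_n)` (after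
sorting both decreasingly, all partial sums of the `a`'s are at most those of the
`ω`'s, and the totals agree), then there exists a real symmetric matrix with
eigenvalues `ω₁,…,ω_n` and diagonal entries `a₁,…,a_n` in that order. -/
theorem mirsky_sufficiency (n : ℕ) (a ω : Fin n → ℝ)
    (σ τ : Equiv.Perm (Fin n))
    (hσ : Antitone (fun i => a (σ i))) (hτ : Antitone (fun i => ω (τ i)))
    (hmaj : ∀ k : ℕ, k ≤ n - 1 →
      ∑ i ∈ Finset.univ.filter (fun i : Fin n => (i : ℕ) < k), a (σ i) ≤
        ∑ i ∈ Finset.univ.filter (fun i : Fin n => (i : ℕ) < k), ω (τ i))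
    (hsum : ∑ i, a i = ∑ i, ω i) :
    ∃ (M : Matrix (Fin n) (Fin n) ℝ) (hM : M.IsHermitian),
      (∀ i, M i i = a i) ∧
        ∃ π : Equiv.Perm (Fin n), ∀ i, hM.eigenvalues i = ω (π i) := by
  classical
  set A : ℕ → ℝ := fun j => if h : j < n then a (σ ⟨j, h⟩) else 0 with hA
  set Ω : ℕ → ℝ := fun j => if h : j < n then ω (τ ⟨j, h⟩) else 0 with hΩ
  have hAapp : ∀ i : Fin n, A ↑i = a (σ i) := fun i => by simp [hA, i.isLt]
  have hΩapp : ∀ i : Fin n, Ω ↑i = ω (τ i) := fun i => by simp [hΩ, i.isLt]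
  have hAanti : ∀ i j, i ≤ j → j < n → A j ≤ A i := by
    intro i j hij hj
    have hi : i < n := lt_of_le_of_lt hij hj
    rw [hA]
    simp only
    rw [dif_pos hj, dif_pos hi]
    exact hσ (show (⟨i, hi⟩ : Fin n) ≤ ⟨j, hj⟩ from hij)
  have hΩanti : ∀ i j, i ≤ j → j < n → Ω j ≤ Ω i := by
    intro i j hij hj
    have hi : i < n := lt_of_le_of_lt hij hj
    rw [hΩ]
    simp only
    rw [dif_pos hj, dif_pos hi]
    exact hτ (show (⟨i, hi⟩ : Fin n) ≤ ⟨j, hj⟩ from hij)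
  have htotal : ∑ j ∈ Finset.range n, A j = ∑ j ∈ Finset.range n, Ω j := by
    rw [← Fin.sum_univ_eq_sum_range A n, ← Fin.sum_univ_eq_sum_range Ω n]
    rw [Finset.sum_congr rfl (fun i _ => hAapp i), Finset.sum_congr rfl (fun i _ => hΩapp i)]
    rw [Equiv.sum_comp σ a, Equiv.sum_comp τ ω]
    exact hsum
  have hmajN : ∀ k, k ≤ n → ∑ j ∈ Finset.range k, A j ≤ ∑ j ∈ Finset.range k, Ω j := by
    intro k hk
    rcases eq_or_lt_of_le hk with rfl | hlt
    · exact le_of_eq htotal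
    · have e1 := my_filter_eq_range n k hk (fun i => a (σ i)) A hAapp
      have e2 := my_filter_eq_range n k hk (fun i => ω (τ i)) Ω hΩapp
      rw [← e1, ← e2]
      exact hmaj k (by omega)
  obtain ⟨U, μ, hU, hμ, hdiag⟩ := mirsky_core n A Ω hAanti hΩanti hmajN htotal
  have h3 : ∀ (X Y : Matrix (Fin n) (Fin n) ℝ),
      X.submatrix ⇑σ.symm id * Y = (X * Y).submatrix ⇑σ.symm id := by
    intro X Y
    have := Matrix.submatrix_mul_equiv X Y ⇑σ.symm (Equiv.refl (Fin n)) id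
    simpa using this
  have h4 : ∀ (X Y : Matrix (Fin n) (Fin n) ℝ),
      X.submatrix ⇑σ.symm id * Y.submatrix id ⇑σ.symm = (X * Y).submatrix ⇑σ.symm ⇑σ.symm := by
    intro X Y
    have := Matrix.submatrix_mul_equiv X Y ⇑σ.symm (Equiv.refl (Fin n)) ⇑σ.symm
    simpa using this
  have hstar2 : star (U.submatrix ⇑σ.symm id) = (star U).submatrix id ⇑σ.symm := by
    rw [Matrix.star_eq_conjTranspose, Matrix.star_eq_conjTranspose,
      Matrix.conjTranspose_submatrix]
  set M : Matrix (Fin n) (Fin n) ℝ :=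
    (U * Matrix.diagonal μ * star U).submatrix ⇑σ.symm ⇑σ.symm with hM
  have hsub1 : M = (U.submatrix ⇑σ.symm id) * Matrix.diagonal μ
      * star (U.submatrix ⇑σ.symm id) := by
    rw [hM, hstar2, ← h4, ← h3]
  have hUG2 : U.submatrix ⇑σ.symm id ∈ Matrix.unitaryGroup (Fin n) ℝ := by
    rw [Matrix.mem_unitaryGroup_iff, hstar2, h4, Matrix.mem_unitaryGroup_iff.mp hU,
      Matrix.submatrix_one_equiv]
  have hherm : M.IsHermitian := by
    rw [hsub1, Matrix.star_eq_conjTranspose]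
    exact Matrix.isHermitian_mul_mul_conjTranspose _ (Matrix.isHermitian_diagonal μ)
  have hmseig := my_eig_multiset M hherm (U.submatrix ⇑σ.symm id) μ hUG2 hsub1
  have hμω : Multiset.map μ Finset.univ.val = Multiset.map ω Finset.univ.val := by
    rw [hμ]
    have h6 : (fun i : Fin n => Ω ↑i) = fun i => ω (τ i) := funext hΩapp
    rw [h6]
    have h5 : Multiset.map (fun i => ω (τ i)) Finset.univ.val
        = Multiset.map ω (Multiset.map ⇑τ Finset.univ.val) := by
      rw [Multiset.map_map]; rfl
    rw [h5]
    congr 1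
    calc Multiset.map ⇑τ Finset.univ.val = (Finset.univ.map τ.toEmbedding).val := by
          rw [Finset.map_val]; rfl
      _ = Finset.univ.val := by rw [Finset.map_univ_equiv]
  obtain ⟨π, hπ⟩ := my_exists_perm _ _ (hmseig.trans hμω)
  refine ⟨M, hherm, ?_, π, hπ⟩
  intro i
  rw [hM, Matrix.submatrix_apply, hdiag (σ.symm i), hAapp (σ.symm i), Equiv.apply_symm_apply]
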